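/- Let X be a nonempty finite set, F a finite collection of functions X → [−1,1], F' := F ∪ {−f : f ∈ F}, and ε ∈ (0,1]. Let g : X → ℝ be a measure with E_{x∈X} g(x) = δ and let ν : X → ℝ be a measure with g(x) ≤ ν(x) for all x ∈ X. Suppose that for every bounded measure g₁ : X → [0,1] with E_{x∈X} g₁(x) = δ there exists f ∈ F' with ⟨g − g₁, f⟩ > ε. Then there exist a function f̄ : X → [−1,1] that is a convex combination of functions from F' and a threshold t ∈ [−1 + ε/3, 1] such that ⟨ν, f̄_t⟩ ≥ ⟨1_X, f̄_{t−ε/3}⟩ + ε/3, where 1_X denotes the constant function 1. -/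

import Mathlib

/-- Normalized inner product `⟨f,g⟩ = (1/|X|) ∑ₓ f(x) g(x)`. -/
noncomputable def ip (X : Type) [Fintype X] (f g : X → ℝ) : ℝ :=
  (∑ x, f x * g x) / (Fintype.card X)

/-- Expectation `E_{x∈X} g(x) = (1/|X|) ∑ₓ g(x)`. -/
noncomputable def ex (X : Type) [Fintype X] (g : X → ℝ) : ℝ :=
  (∑ x, g x) / (Fintype.card X)

/-- A measure on `X`: nonnegative with expectation at most 1. -/
def IsMeasure (X : Type) [Fintype X] (g : X → ℝ) : Prop :=
  (∀ x, 0 ≤ g x) ∧ ex X g ≤ 1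

/-- `fbar` is a convex combination of functions from the collection `H`. -/
def IsConvexComb {X : Type} (H : Set (X → ℝ)) (fbar : X → ℝ) : Prop :=
  ∃ (T : Finset (X → ℝ)) (lam : (X → ℝ) → ℝ),
    (↑T : Set (X → ℝ)) ⊆ H ∧ (∀ h ∈ T, 0 ≤ lam h) ∧ (∑ h ∈ T, lam h) = 1 ∧
    fbar = fun x => ∑ h ∈ T, lam h * h x

/-- The threshold function `f̄_t : f̄_t(x) = 1` iff `f̄(x) ≥ t`, else `0`. -/
noncomputable def thr {X : Type} (fbar : X → ℝ) (t : ℝ) : X → ℝ :=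
  fun x => if t ≤ fbar x then 1 else 0

lemma cardX_pos (X : Type) [Fintype X] [Nonempty X] : (0:ℝ) < (Fintype.card X : ℝ) := by
  exact_mod_cast Fintype.card_pos

lemma ip_sum_comb {X : Type} [Fintype X] (w : X → ℝ) {ι : Type} [Fintype ι]
    (c : ι → ℝ) (h : ι → X → ℝ) :
    ip X w (fun x => ∑ i, c i * h i x) = ∑ i, c i * ip X w (h i) := by
  unfold ip
  simp_rw [← mul_div_assoc]
  rw [← Finset.sum_div]
  congr 1
  simp_rw [Finset.mul_sum]
  rw [Finset.sum_comm]
  apply Finset.sum_congr rfl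
  intro i _
  apply Finset.sum_congr rfl
  intro x _
  ring

lemma partA (X : Type) [Fintype X] [Nonempty X] (F : Finset (X → ℝ))
    (hF : ∀ f ∈ F, ∀ x, f x ∈ Set.Icc (-1 : ℝ) 1)
    (ε δ : ℝ) (hε0 : 0 < ε) (hδ0 : 0 ≤ δ) (hδ1 : δ ≤ 1)
    (g : X → ℝ)
    (H : ∀ g₁ : X → ℝ, IsMeasure X g₁ → (∀ x, 0 ≤ g₁ x ∧ g₁ x ≤ 1) →
      ex X g₁ = δ →
      ∃ f ∈ (↑F : Set (X → ℝ)) ∪ (fun f => -f) '' (↑F : Set (X → ℝ)),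
        ε < ip X (fun x => g x - g₁ x) f) :
    ∃ fbar : X → ℝ,
      (∀ x, fbar x ∈ Set.Icc (-1 : ℝ) 1) ∧
      IsConvexComb ((↑F : Set (X → ℝ)) ∪ (fun f => -f) '' (↑F : Set (X → ℝ))) fbar ∧
      ∀ g₁ : X → ℝ, (∀ x, 0 ≤ g₁ x ∧ g₁ x ≤ 1) → ex X g₁ = δ →
        ε < ip X (fun x => g x - g₁ x) fbar := by
  classical
  have hN : (0:ℝ) < (Fintype.card X : ℝ) := cardX_pos X
  set F' : Finset (X → ℝ) := F ∪ F.image (fun f => -f) with hF'def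
  have hcoe : (↑F' : Set (X → ℝ))
      = (↑F : Set (X → ℝ)) ∪ (fun f => -f) '' (↑F : Set (X → ℝ)) := by
    simp [hF'def]
  set K : Set (X → ℝ) := {g₁ | (∀ x, 0 ≤ g₁ x ∧ g₁ x ≤ 1) ∧ ex X g₁ = δ} with hKdef
  have hexlin : ∀ (u v : X → ℝ) (p q : ℝ), ex X (fun x => p * u x + q * v x)
      = p * ex X u + q * ex X v := by
    intro u v p q
    unfold ex
    rw [Finset.sum_add_distrib, ← Finset.mul_sum, ← Finset.mul_sum]
    ring
  have hKconv : Convex ℝ K := by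
    intro u hu v hv p q hp hq hpq
    obtain rfl : q = 1 - p := by linarith
    refine ⟨fun x => ?_, ?_⟩
    · have h1 := (hu.1 x); have h2 := (hv.1 x)
      have e1 : (p • u + (1-p) • v) x = p * u x + (1-p) * v x := by
        simp [smul_eq_mul]
      rw [e1]
      constructor
      · have := mul_nonneg hp h1.1
        have := mul_nonneg hq h2.1
        nlinarith
      · nlinarith [h1.2, h2.2]
    · have h2 : (p • u + (1-p) • v) = (fun x => p * u x + (1-p) * v x) := by
        funext x; simp [smul_eq_mul]
      rw [h2, hexlin u v p (1-p), hu.2, hv.2]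
      ring
  have hKmeas : ∀ g₁ ∈ K, IsMeasure X g₁ := by
    intro g₁ hg₁
    exact ⟨fun x => (hg₁.1 x).1, by rw [hg₁.2]; exact hδ1⟩
  have hδK : (fun _ : X => δ) ∈ K := by
    refine ⟨fun x => ⟨hδ0, hδ1⟩, ?_⟩
    unfold ex
    rw [Finset.sum_const, nsmul_eq_mul]
    field_simp
    rw [Finset.card_univ, mul_comm]
  -- the index type
  set ι := {f : X → ℝ // f ∈ F'} with hιdef
  set Φ : (X → ℝ) → (ι → ℝ) := fun g₁ i => ip X (fun x => g x - g₁ x) i.1 with hΦdef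
  have hΦcont : Continuous Φ := by
    apply continuous_pi
    intro i
    show Continuous fun g₁ : X → ℝ => (∑ x, (g x - g₁ x) * i.1 x) / ((Fintype.card X : ℕ) : ℝ)
    apply Continuous.div_const
    apply continuous_finset_sum
    intro x _
    exact ((continuous_const.sub (continuous_apply x)).mul continuous_const)
  set A : Set (ι → ℝ) := Φ '' K with hAdef
  set B : Set (ι → ℝ) := {y | ∀ i, y i ≤ ε} with hBdef
  have hAconv : Convex ℝ A := by
    rintro _ ⟨u, hu, rfl⟩ _ ⟨v, hv, rfl⟩ p q hp hq hpq
    obtain rfl : q = 1 - p := by linarith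
    refine ⟨p • u + (1-p) • v, hKconv hu hv hp hq hpq, ?_⟩
    funext i
    simp only [Pi.add_apply, Pi.smul_apply, smul_eq_mul, hΦdef]
    unfold ip
    have hpt : ∀ x, (g x - (p * u x + (1-p) * v x)) * i.1 x
        = p * ((g x - u x) * i.1 x) + (1-p) * ((g x - v x) * i.1 x) := fun x => by ring
    simp_rw [hpt]
    rw [Finset.sum_add_distrib, ← Finset.mul_sum, ← Finset.mul_sum]
    ring
  have hAcomp : IsCompact A := by
    apply IsCompact.image _ hΦcont
    have hsub : K ⊆ Set.pi Set.univ (fun _ : X => Set.Icc (0:ℝ) 1) := by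
      intro u hu x _
      exact ⟨(hu.1 x).1, (hu.1 x).2⟩
    have hcl : IsClosed K := by
      have h1 : IsClosed {g₁ : X → ℝ | ∀ x, 0 ≤ g₁ x ∧ g₁ x ≤ 1} := by
        have : {g₁ : X → ℝ | ∀ x, 0 ≤ g₁ x ∧ g₁ x ≤ 1}
            = Set.pi Set.univ (fun _ : X => Set.Icc (0:ℝ) 1) := by
          ext u
          constructor
          · intro hu x _
            exact ⟨(hu x).1, (hu x).2⟩
          · intro hu x
            exact hu x (Set.mem_univ x)
        rw [this]
        exact isClosed_set_pi (fun x _ => isClosed_Icc)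
      have h2 : IsClosed {g₁ : X → ℝ | ex X g₁ = δ} := by
        apply isClosed_eq _ continuous_const
        unfold ex
        apply Continuous.div_const
        exact continuous_finset_sum _ (fun x _ => continuous_apply x)
      have : K = {g₁ : X → ℝ | ∀ x, 0 ≤ g₁ x ∧ g₁ x ≤ 1} ∩ {g₁ : X → ℝ | ex X g₁ = δ} := by
        rfl
      rw [this]; exact h1.inter h2
    exact IsCompact.of_isClosed_subset (isCompact_univ_pi (fun _ => isCompact_Icc)) hcl hsub
  have hBconv : Convex ℝ B := by
    intro u hu v hv p q hp hq hpq i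
    simp only [Pi.add_apply, Pi.smul_apply, smul_eq_mul]
    have h1 : p * u i ≤ p * ε := by nlinarith [hu i]
    have h2 : q * v i ≤ q * ε := by nlinarith [hv i]
    nlinarith
  have hBclosed : IsClosed B := by
    have : B = Set.pi Set.univ (fun _ : ι => Set.Iic ε) := by
      ext y
      constructor
      · intro hy i _
        exact hy i
      · intro hy i
        exact hy i (Set.mem_univ i)
    rw [this]
    exact isClosed_set_pi (fun i _ => isClosed_Iic)
  have hdisj : Disjoint A B := by
    rw [Set.disjoint_left]
    rintro p ⟨g₁, hg₁K, rfl⟩ hpB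
    obtain ⟨f, hfmem, hip⟩ := H g₁ (hKmeas g₁ hg₁K) hg₁K.1 hg₁K.2
    have hfF' : f ∈ F' := by
      rw [← Finset.mem_coe, hcoe]; exact hfmem
    have := hpB ⟨f, hfF'⟩
    simp only [hΦdef] at this
    linarith
  obtain ⟨φ, u, v, hAu, huv, hBv⟩ :=
    geometric_hahn_banach_compact_closed hAconv hAcomp hBconv hBclosed hdisj
  set c : ι → ℝ := fun i => φ (fun j => if i = j then 1 else 0) with hcdef
  have hφ : ∀ y : ι → ℝ, φ y = ∑ i, y i * c i := by
    intro y
    conv_lhs => rw [pi_eq_sum_univ y]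
    rw [map_sum]
    congr 1; ext i
    rw [map_smul]
    simp [hcdef, smul_eq_mul]
  have hεB : (fun _ : ι => ε) ∈ B := fun i => le_refl ε
  have hc : ∀ i, c i ≤ 0 := by
    by_contra hcon
    push_neg at hcon
    obtain ⟨i, hi⟩ := hcon
    set M : ℝ := max 0 ((φ (fun _ => ε) - v) / c i) + 1 with hMdef
    have hM0 : 0 < M := by positivity
    set bM : ι → ℝ := fun j => ε - M * (if i = j then 1 else 0) with hbMdef
    have hbMB : bM ∈ B := by
      intro j
      show ε - M * (if i = j then 1 else 0) ≤ ε
      by_cases h : i = j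
      · rw [if_pos h]; nlinarith
      · rw [if_neg h]; simp
    have hval : φ bM = φ (fun _ => ε) - M * c i := by
      have hb : bM = (fun _ : ι => ε) + (-M) • (fun j => if i = j then (1:ℝ) else 0) := by
        funext j
        show ε - M * _ = _
        simp only [Pi.add_apply, Pi.smul_apply, smul_eq_mul]
        ring
      rw [hb, map_add, map_smul, smul_eq_mul]
      have : φ (fun j => if i = j then (1:ℝ) else 0) = c i := rfl
      rw [this]
      ring
    have h1 := hBv bM hbMB
    rw [hval] at h1
    have h2 : (φ (fun _ => ε) - v) / c i ≤ M - 1 := by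
      rw [hMdef]; simp [le_max_iff]
    have h3 : φ (fun _ => ε) - v ≤ (M - 1) * c i := by
      rw [div_le_iff₀ hi] at h2; linarith
    nlinarith
  set lam : ι → ℝ := fun i => -c i with hlamdef
  have hlam0 : ∀ i, 0 ≤ lam i := fun i => by simp [hlamdef]; exact hc i
  set s : ℝ := ∑ i, lam i with hsdef
  have hs0 : 0 ≤ s := Finset.sum_nonneg (fun i _ => hlam0 i)
  have hsumc : ∑ i, c i = -s := by
    rw [hsdef, ← Finset.sum_neg_distrib]
    congr 1; ext i; simp [hlamdef]
  have hφε : φ (fun _ : ι => ε) = -(ε * s) := by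
    rw [hφ]
    rw [← Finset.mul_sum, hsumc]; ring
  have hkey : ∀ g₁ ∈ K, ε * s < ∑ i, lam i * Φ g₁ i := by
    intro g₁ hg₁
    have h1 := hAu (Φ g₁) ⟨g₁, hg₁, rfl⟩
    have h2 := hBv _ hεB
    rw [hφε] at h2
    rw [hφ] at h1
    have h3 : ∑ i, Φ g₁ i * c i = -∑ i, lam i * Φ g₁ i := by
      rw [← Finset.sum_neg_distrib]
      congr 1; ext i; simp [hlamdef]; ring
    rw [h3] at h1
    linarith
  have hspos : 0 < s := by
    rcases lt_or_eq_of_le hs0 with h | h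
    · exact h
    · exfalso
      have hc0 : ∀ i, c i = 0 := by
        intro i
        have hsum0 : ∑ i, lam i = 0 := by rw [← hsdef]; exact h.symm
        have hall := (Finset.sum_eq_zero_iff_of_nonneg (fun i _ => hlam0 i)).1 hsum0
        have hli : lam i = 0 := hall i (Finset.mem_univ i)
        simp only [hlamdef, neg_eq_zero] at hli
        exact hli
      have hφ0 : ∀ y, φ y = 0 := by
        intro y; rw [hφ]; simp [hc0]
      have h1 := hAu (Φ (fun _ => δ)) ⟨_, hδK, rfl⟩
      have h2 := hBv _ hεB
      rw [hφ0] at h1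
      rw [hφ0] at h2
      linarith
  set lam' : ι → ℝ := fun i => lam i / s with hlam'def
  have hlam'0 : ∀ i, 0 ≤ lam' i := fun i => div_nonneg (hlam0 i) hs0
  have hlam'sum : ∑ i, lam' i = 1 := by
    rw [hlam'def, ← Finset.sum_div, ← hsdef, div_self hspos.ne']
  set fbar : X → ℝ := fun x => ∑ i, lam' i * i.1 x with hfbardef
  have hιbound : ∀ i : ι, ∀ x, -1 ≤ i.1 x ∧ i.1 x ≤ 1 := by
    rintro ⟨f, hf⟩ x
    simp only []
    rw [hF'def, Finset.mem_union] at hf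
    rcases hf with hf | hf
    · have := hF f hf x; exact ⟨this.1, this.2⟩
    · rw [Finset.mem_image] at hf
      obtain ⟨f₀, hf₀, rfl⟩ := hf
      have := hF f₀ hf₀ x
      simp only [Pi.neg_apply]
      constructor <;> linarith [this.1, this.2]
  refine ⟨fbar, ?_, ?_, ?_⟩
  · intro x
    constructor
    · have : ∑ i, lam' i * (-1 : ℝ) ≤ ∑ i, lam' i * i.1 x := by
        apply Finset.sum_le_sum
        intro i _
        have := (hιbound i x).1
        nlinarith [hlam'0 i]
      rw [← Finset.sum_mul, hlam'sum] at this
      simpa [hfbardef] using this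
    · have : ∑ i, lam' i * i.1 x ≤ ∑ i, lam' i * (1 : ℝ) := by
        apply Finset.sum_le_sum
        intro i _
        have := (hιbound i x).2
        nlinarith [hlam'0 i]
      rw [← Finset.sum_mul, hlam'sum] at this
      simpa [hfbardef] using this
  · refine ⟨F', fun h => if hh : h ∈ F' then lam' ⟨h, hh⟩ else 0, ?_, ?_, ?_, ?_⟩
    · rw [hcoe]
    · intro h hh
      simp [hh, hlam'0]
    · rw [← Finset.sum_attach F' (fun h => if hh : h ∈ F' then lam' ⟨h, hh⟩ else 0)]
      rw [← hlam'sum, Finset.univ_eq_attach]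
      congr 1; ext i
      simp [i.2]
    · funext x
      rw [hfbardef]
      simp only []
      rw [← Finset.sum_attach F' (fun h => (if hh : h ∈ F' then lam' ⟨h, hh⟩ else 0) * h x)]
      rw [Finset.univ_eq_attach]
      congr 1; ext i
      simp [i.2]
  · intro g₁ hb hexδ
    have hg₁K : g₁ ∈ K := ⟨hb, hexδ⟩
    have h1 := hkey g₁ hg₁K
    have h2 : ip X (fun x => g x - g₁ x) fbar = ∑ i, lam' i * Φ g₁ i := by
      rw [hfbardef]
      rw [ip_sum_comb]
    rw [h2]
    have h3 : ∑ i, lam' i * Φ g₁ i = (∑ i, lam i * Φ g₁ i) / s := by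
      rw [Finset.sum_div]
      congr 1; ext i
      rw [hlam'def]; ring
    rw [h3]
    rw [lt_div_iff₀ hspos]
    linarith

lemma indicator_antitone (c d : ℝ) (hd : 0 ≤ d) :
    Antitone (fun t => if t ≤ c then d else (0:ℝ)) := by
  intro s t hst
  dsimp only
  by_cases h1 : t ≤ c
  · rw [if_pos h1, if_pos (hst.trans h1)]
  · rw [if_neg h1]
    by_cases h2 : s ≤ c
    · rw [if_pos h2]; exact hd
    · rw [if_neg h2]

lemma integral_ind (b c : ℝ) (hb : b ≤ 1) (hc : c ≤ 1) :
    ∫ t in b..(1:ℝ), (if t ≤ c then (1:ℝ) else 0) = max (c - b) 0 := by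
  rcases le_or_gt c b with h | h
  · have h0 : ∫ t in b..(1:ℝ), (if t ≤ c then (1:ℝ) else 0) = ∫ t in b..(1:ℝ), (0:ℝ) := by
      rw [intervalIntegral.integral_of_le hb, intervalIntegral.integral_of_le hb]
      apply MeasureTheory.setIntegral_congr_fun measurableSet_Ioc
      intro t ht
      dsimp only
      rw [if_neg (by linarith [ht.1] : ¬ t ≤ c)]
    rw [h0, intervalIntegral.integral_zero, eq_comm,
      max_eq_right (by linarith : c - b ≤ (0:ℝ))]
  · have hint1 : IntervalIntegrable (fun t => if t ≤ c then (1:ℝ) else 0)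
        MeasureTheory.volume b c :=
      (indicator_antitone c 1 one_pos.le).intervalIntegrable
    have hint2 : IntervalIntegrable (fun t => if t ≤ c then (1:ℝ) else 0)
        MeasureTheory.volume c 1 :=
      (indicator_antitone c 1 one_pos.le).intervalIntegrable
    rw [← intervalIntegral.integral_add_adjacent_intervals hint1 hint2]
    have e1 : ∫ t in b..c, (if t ≤ c then (1:ℝ) else 0) = c - b := by
      have he : ∫ t in b..c, (if t ≤ c then (1:ℝ) else 0) = ∫ t in b..c, (1:ℝ) := by
        apply intervalIntegral.integral_congr
        intro t ht
        rw [Set.uIcc_of_le h.le] at ht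
        dsimp only
        rw [if_pos ht.2]
      rw [he]
      simp
    have e2 : ∫ t in c..(1:ℝ), (if t ≤ c then (1:ℝ) else 0) = 0 := by
      rw [intervalIntegral.integral_of_le hc]
      have hz : ∫ t in Set.Ioc c (1:ℝ), (if t ≤ c then (1:ℝ) else 0) = ∫ t in Set.Ioc c (1:ℝ), (0:ℝ) := by
        apply MeasureTheory.setIntegral_congr_fun measurableSet_Ioc
        intro t ht
        dsimp only
        rw [if_neg (not_le.mpr ht.1)]
      rw [hz]
      simp
    rw [e1, e2, max_eq_left (by linarith : (0:ℝ) ≤ c - b)]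
    ring

set_option maxHeartbeats 1600000 in
/-- Steps 1 and 2 combined: if every dense bounded measure is distinguished
from `g` by some `f ∈ F'`, then some threshold of a convex combination of
functions from `F'` distinguishes `ν` from the constant function `1`. -/
theorem threshold_distinguishes_nu
    (X : Type) [Fintype X] [Nonempty X] (F : Finset (X → ℝ))
    (hF : ∀ f ∈ F, ∀ x, f x ∈ Set.Icc (-1 : ℝ) 1)
    (ε δ : ℝ) (hε0 : 0 < ε) (hε1 : ε ≤ 1)
    (g : X → ℝ) (hg : IsMeasure X g) (hgδ : ex X g = δ)
    (ν : X → ℝ) (hν : IsMeasure X ν) (hgν : ∀ x, g x ≤ ν x)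
    (H : ∀ g₁ : X → ℝ, IsMeasure X g₁ → (∀ x, 0 ≤ g₁ x ∧ g₁ x ≤ 1) →
      ex X g₁ = δ →
      ∃ f ∈ (↑F : Set (X → ℝ)) ∪ (fun f => -f) '' (↑F : Set (X → ℝ)),
        ε < ip X (fun x => g x - g₁ x) f) :
    ∃ (fbar : X → ℝ) (t : ℝ),
      (∀ x, fbar x ∈ Set.Icc (-1 : ℝ) 1) ∧
      IsConvexComb ((↑F : Set (X → ℝ)) ∪ (fun f => -f) '' (↑F : Set (X → ℝ))) fbar ∧
      -1 + ε / 3 ≤ t ∧ t ≤ 1 ∧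
      ip X ν (thr fbar t) ≥ ip X (fun _ => 1) (thr fbar (t - ε / 3)) + ε / 3 := by
  classical
  have hN : (0:ℝ) < ((Fintype.card X : ℕ) : ℝ) := cardX_pos X
  have hδ0 : 0 ≤ δ := by
    rw [← hgδ]
    exact div_nonneg (Finset.sum_nonneg (fun x _ => hg.1 x)) hN.le
  have hδ1 : δ ≤ 1 := hgδ ▸ hg.2
  obtain ⟨fb, hfbIcc, hfbCC, hkey⟩ := partA X F hF ε δ hε0 hδ0 hδ1 g H
  have hfble : ∀ x, fb x ≤ 1 := fun x => (hfbIcc x).2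
  have hfbge : ∀ x, -1 ≤ fb x := fun x => (hfbIcc x).1
  -- ## Part B : the quantile and the optimal bounded measure
  obtain ⟨x₀, -, hx₀⟩ := Finset.exists_min_image Finset.univ fb Finset.univ_nonempty
  set Aset : Finset X := Finset.univ.filter
    (fun x => δ * ((Fintype.card X : ℕ) : ℝ)
      ≤ ((Finset.univ.filter (fun y => fb x ≤ fb y)).card : ℝ)) with hAsetdef
  have hx₀A : x₀ ∈ Aset := by
    rw [hAsetdef, Finset.mem_filter]
    refine ⟨Finset.mem_univ _, ?_⟩
    have heq : Finset.univ.filter (fun y => fb x₀ ≤ fb y) = Finset.univ := by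
      apply Finset.filter_true_of_mem
      intro y _
      exact hx₀ y (Finset.mem_univ y)
    rw [heq, Finset.card_univ]
    nlinarith
  obtain ⟨xs, hxsA, hxs⟩ := Finset.exists_max_image Aset fb ⟨x₀, hx₀A⟩
  set a := fb xs with hadef
  have ha1 : a ≤ 1 := hfble xs
  have ham1 : -1 ≤ a := hfbge xs
  have claim1 : δ * ((Fintype.card X : ℕ) : ℝ)
      ≤ ((Finset.univ.filter (fun y => a ≤ fb y)).card : ℝ) := by
    rw [hAsetdef, Finset.mem_filter] at hxsA
    exact hxsA.2
  set P : Finset X := Finset.univ.filter (fun y => a < fb y) with hPdef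
  set Q : Finset X := Finset.univ.filter (fun y => fb y = a) with hQdef
  have claim2 : ((P.card : ℝ)) ≤ δ * ((Fintype.card X : ℕ) : ℝ) := by
    by_contra hlt
    push_neg at hlt
    have hcpos : (0:ℝ) < (P.card : ℝ) := lt_of_le_of_lt (mul_nonneg hδ0 hN.le) hlt
    have hPne : P.Nonempty := Finset.card_pos.mp (by exact_mod_cast hcpos)
    obtain ⟨x', hx'P, hx'min⟩ := Finset.exists_min_image P fb hPne
    have hsub : P ⊆ Finset.univ.filter (fun y => fb x' ≤ fb y) := by
      intro y hy
      rw [Finset.mem_filter]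
      exact ⟨Finset.mem_univ y, hx'min y hy⟩
    have hcard := Finset.card_le_card hsub
    have hx'A : x' ∈ Aset := by
      rw [hAsetdef, Finset.mem_filter]
      refine ⟨Finset.mem_univ _, ?_⟩
      calc δ * ((Fintype.card X : ℕ) : ℝ) ≤ (P.card : ℝ) := hlt.le
        _ ≤ _ := by exact_mod_cast hcard
    have h1 := hxs x' hx'A
    have h2 : a < fb x' := (Finset.mem_filter.mp hx'P).2
    linarith
  have hQxs : xs ∈ Q := by
    rw [hQdef, Finset.mem_filter]
    exact ⟨Finset.mem_univ _, rfl⟩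
  have hQpos : (0:ℝ) < (Q.card : ℝ) := by
    exact_mod_cast Finset.card_pos.mpr ⟨xs, hQxs⟩
  have hcards : ((Finset.univ.filter (fun y => a ≤ fb y)).card : ℝ)
      = (P.card : ℝ) + (Q.card : ℝ) := by
    have hsplit : Finset.univ.filter (fun y => a ≤ fb y) = P ∪ Q := by
      ext y
      simp only [hPdef, hQdef, Finset.mem_filter, Finset.mem_union, Finset.mem_univ, true_and]
      constructor
      · intro h
        rcases lt_or_eq_of_le h with h' | h'
        · exact Or.inl h'
        · exact Or.inr h'.symm
      · intro h
        rcases h with h | h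
        · exact h.le
        · exact le_of_eq h.symm
    have hdisjPQ : Disjoint P Q := by
      rw [Finset.disjoint_left]
      intro y hyP hyQ
      have h1 := (Finset.mem_filter.mp hyP).2
      have h2 := (Finset.mem_filter.mp hyQ).2
      rw [h2] at h1
      exact lt_irrefl a h1
    rw [hsplit, Finset.card_union_of_disjoint hdisjPQ]
    push_cast
    ring
  set θ : ℝ := (δ * ((Fintype.card X : ℕ) : ℝ) - (P.card:ℝ)) / (Q.card : ℝ) with hθdef
  have hθ0 : 0 ≤ θ := div_nonneg (by linarith) hQpos.le
  have hθ1 : θ ≤ 1 := by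
    rw [hθdef, div_le_one hQpos]
    linarith [claim1, hcards]
  set g₁ : X → ℝ := fun x => if a < fb x then 1 else if fb x = a then θ else 0 with hg₁def
  have hg₁b : ∀ x, 0 ≤ g₁ x ∧ g₁ x ≤ 1 := by
    intro x
    rw [hg₁def]
    dsimp only
    by_cases h1 : a < fb x
    · rw [if_pos h1]; norm_num
    · rw [if_neg h1]
      by_cases h2 : fb x = a
      · rw [if_pos h2]; exact ⟨hθ0, hθ1⟩
      · rw [if_neg h2]; norm_num
  have hg₁sum : ∑ x, g₁ x = δ * ((Fintype.card X : ℕ) : ℝ) := by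
    have hpt : ∀ x, g₁ x = (if a < fb x then (1:ℝ) else 0) + (if fb x = a then θ else 0) := by
      intro x
      by_cases h1 : a < fb x
      · have h2 : ¬ fb x = a := by
          intro h
          rw [h] at h1
          exact lt_irrefl a h1
        simp [hg₁def, h1, h2]
      · by_cases h2 : fb x = a
        · simp [hg₁def, h1, h2]
        · simp [hg₁def, h1, h2]
    simp_rw [hpt]
    rw [Finset.sum_add_distrib]
    have e1 : ∑ x, (if a < fb x then (1:ℝ) else 0) = (P.card : ℝ) := by
      rw [← Finset.sum_filter, ← hPdef, Finset.sum_const, nsmul_eq_mul, mul_one]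
    have e2 : ∑ x, (if fb x = a then θ else 0) = (Q.card : ℝ) * θ := by
      rw [← Finset.sum_filter, ← hQdef, Finset.sum_const, nsmul_eq_mul]
    rw [e1, e2, hθdef, mul_div_cancel₀ _ hQpos.ne']
    ring
  have hg₁ex : ex X g₁ = δ := by
    unfold ex
    rw [hg₁sum]
    field_simp
  set p : X → ℝ := fun x => max (fb x - a) 0 with hpdef
  have hsum_eq : ∑ x, g₁ x * (fb x - a) = ∑ x, p x := by
    apply Finset.sum_congr rfl
    intro x _
    by_cases h1 : a < fb x
    · have hm : max (fb x - a) 0 = fb x - a := max_eq_left (by linarith)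
      simp [hg₁def, hpdef, h1, hm]
    · by_cases h2 : fb x = a
      · simp [hg₁def, hpdef, h1, h2]
      · have hm : max (fb x - a) 0 = 0 := max_eq_right (by linarith [not_lt.mp h1])
        simp [hg₁def, hpdef, h1, h2, hm]
  have hgsum : ∑ x, g x = δ * ((Fintype.card X : ℕ) : ℝ) := by
    have h := hgδ
    unfold ex at h
    rw [div_eq_iff hN.ne'] at h
    exact h
  have hkey1 := hkey g₁ hg₁b hg₁ex
  have hgap : ε < (∑ x, g x * p x) / ((Fintype.card X : ℕ) : ℝ)
      - (∑ x, p x) / ((Fintype.card X : ℕ) : ℝ) := by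
    have hexp : ip X (fun x => g x - g₁ x) fb
        = ((∑ x, g x * fb x) - (∑ x, g₁ x * fb x)) / ((Fintype.card X : ℕ) : ℝ) := by
      unfold ip
      congr 1
      rw [← Finset.sum_sub_distrib]
      apply Finset.sum_congr rfl
      intro x _
      ring
    have h1 : ∑ x, g x * fb x ≤ ∑ x, g x * p x + a * (δ * ((Fintype.card X : ℕ) : ℝ)) := by
      rw [← hgsum, Finset.mul_sum, ← Finset.sum_add_distrib]
      apply Finset.sum_le_sum
      intro x _
      have hp1 : fb x - a ≤ p x := le_max_left _ _
      have hg0 := hg.1 x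
      nlinarith
    have h2 : ∑ x, g₁ x * fb x = ∑ x, p x + a * (δ * ((Fintype.card X : ℕ) : ℝ)) := by
      have hpt : ∀ x, g₁ x * fb x = g₁ x * (fb x - a) + a * g₁ x := fun x => by ring
      simp_rw [hpt]
      rw [Finset.sum_add_distrib, hsum_eq, ← Finset.mul_sum, hg₁sum]
    rw [hexp] at hkey1
    have h3 : ((∑ x, g x * fb x) - (∑ x, g₁ x * fb x))
        ≤ (∑ x, g x * p x) - (∑ x, p x) := by linarith
    have h4 : ((∑ x, g x * fb x) - (∑ x, g₁ x * fb x)) / ((Fintype.card X : ℕ) : ℝ)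
        ≤ ((∑ x, g x * p x) - (∑ x, p x)) / ((Fintype.card X : ℕ) : ℝ) := by
      gcongr
    rw [sub_div, sub_div] at h4
    rw [sub_div] at hkey1
    linarith
  -- ## Part C : finding the threshold
  set W : (X → ℝ) → ℝ → ℝ :=
    fun w t => (∑ x, w x * (if t ≤ fb x then (1:ℝ) else 0)) / ((Fintype.card X : ℕ) : ℝ)
    with hWdef
  set one : X → ℝ := fun _ => 1 with honedef
  have hWanti : ∀ w : X → ℝ, (∀ x, 0 ≤ w x) → Antitone (W w) := by
    intro w hw s t hst
    rw [hWdef]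
    dsimp only
    have hnum : ∑ x, w x * (if t ≤ fb x then (1:ℝ) else 0)
        ≤ ∑ x, w x * (if s ≤ fb x then (1:ℝ) else 0) := by
      apply Finset.sum_le_sum
      intro x _
      exact mul_le_mul_of_nonneg_left (indicator_antitone (fb x) 1 one_pos.le hst) (hw x)
    exact (div_le_div_iff_of_pos_right hN).mpr hnum
  have hWnonneg : ∀ w : X → ℝ, (∀ x, 0 ≤ w x) → ∀ t, 0 ≤ W w t := by
    intro w hw t
    rw [hWdef]
    dsimp only
    apply div_nonneg _ hN.le
    exact Finset.sum_nonneg fun x _ => mul_nonneg (hw x) (by positivity)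
  have hWint : ∀ (w : X → ℝ) (b b' : ℝ), (∀ x, 0 ≤ w x) →
      IntervalIntegrable (W w) MeasureTheory.volume b b' := by
    intro w b b' hw
    exact (hWanti w hw).intervalIntegrable
  have hWeq : ∀ (w : X → ℝ) (b : ℝ), b ≤ 1 →
      ∫ t in b..(1:ℝ), W w t = (∑ x, w x * max (fb x - b) 0) / ((Fintype.card X : ℕ) : ℝ) := by
    intro w b hb
    rw [hWdef]
    dsimp only
    rw [intervalIntegral.integral_div]
    congr 1
    rw [intervalIntegral.integral_finset_sum]
    · apply Finset.sum_congr rfl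
      intro x _
      rw [intervalIntegral.integral_const_mul, integral_ind b (fb x) hb (hfble x)]
    · intro x _
      exact ((indicator_antitone (fb x) 1 one_pos.le).intervalIntegrable).const_mul (w x)
  have hone : ∀ x, (0:ℝ) ≤ one x := fun x => by rw [honedef]; norm_num
  have hIg : ∫ t in a..(1:ℝ), W g t = (∑ x, g x * p x) / ((Fintype.card X : ℕ) : ℝ) := by
    rw [hWeq g a ha1]
  have hI1 : ∫ t in a..(1:ℝ), W one t = (∑ x, p x) / ((Fintype.card X : ℕ) : ℝ) := by
    rw [hWeq one a ha1]
    congr 1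
    apply Finset.sum_congr rfl
    intro x _
    rw [honedef]
    ring
  have hgap2 : ε < (∫ t in a..(1:ℝ), W g t) - ∫ t in a..(1:ℝ), W one t := by
    rw [hIg, hI1]; exact hgap
  have hipgp_le : (∑ x, g x * p x) / ((Fintype.card X : ℕ) : ℝ) ≤ δ * (1 - a) := by
    have hnum : ∑ x, g x * p x ≤ (1 - a) * (δ * ((Fintype.card X : ℕ) : ℝ)) := by
      rw [← hgsum, Finset.mul_sum]
      apply Finset.sum_le_sum
      intro x _
      have hpx : p x ≤ 1 - a := by
        rw [hpdef]
        apply max_le (by linarith [hfble x]) (by linarith)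
      have hg0 := hg.1 x
      nlinarith
    calc (∑ x, g x * p x) / ((Fintype.card X : ℕ) : ℝ)
        ≤ ((1 - a) * (δ * ((Fintype.card X : ℕ) : ℝ))) / ((Fintype.card X : ℕ) : ℝ) := by gcongr
      _ = δ * (1 - a) := by field_simp
  have hI1nn : 0 ≤ (∑ x, p x) / ((Fintype.card X : ℕ) : ℝ) := by
    apply div_nonneg _ hN.le
    apply Finset.sum_nonneg
    intro x _
    rw [hpdef]
    exact le_max_right _ _
  have hεa : ε < 1 - a := by
    have h5 : δ * (1 - a) ≤ 1 - a := by nlinarith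
    linarith [hgap, hipgp_le, hI1nn]
  -- split the W-one integral and shift
  have hsplit1 : ∫ t in a..(1:ℝ), W one t
      = (∫ t in a..(1 - ε/3), W one t) + ∫ t in (1 - ε/3)..(1:ℝ), W one t :=
    (intervalIntegral.integral_add_adjacent_intervals
      (hWint one a (1 - ε/3) hone) (hWint one (1 - ε/3) 1 hone)).symm
  have htail : 0 ≤ ∫ t in (1 - ε/3)..(1:ℝ), W one t :=
    intervalIntegral.integral_nonneg (by linarith) (fun u _ => hWnonneg one hone u)
  have hshift : ∫ t in (a + ε/3)..(1:ℝ), W one (t - ε/3)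
      = ∫ s in a..(1 - ε/3), W one s := by
    have h := intervalIntegral.integral_comp_sub_right (a := a + ε/3) (b := 1)
      (fun s => W one s) (ε/3)
    rw [show a + ε/3 - ε/3 = a by ring] at h
    exact h
  have hsplit2 : ∫ t in a..(1:ℝ), W g t
      = (∫ t in a..(a + ε/3), W g t) + ∫ t in (a + ε/3)..(1:ℝ), W g t :=
    (intervalIntegral.integral_add_adjacent_intervals
      (hWint g a (a + ε/3) hg.1) (hWint g (a + ε/3) 1 hg.1)).symm
  have hWgle1 : ∀ t, W g t ≤ 1 := by
    intro t
    rw [hWdef]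
    dsimp only
    rw [div_le_one hN]
    calc ∑ x, g x * (if t ≤ fb x then (1:ℝ) else 0)
        ≤ ∑ x, g x := by
          apply Finset.sum_le_sum
          intro x _
          have hgx := hg.1 x
          by_cases h : t ≤ fb x
          · rw [if_pos h]; linarith
          · rw [if_neg h]; nlinarith
      _ = δ * ((Fintype.card X : ℕ) : ℝ) := hgsum
      _ ≤ 1 * ((Fintype.card X : ℕ) : ℝ) := by nlinarith
      _ = ((Fintype.card X : ℕ) : ℝ) := one_mul _
  have hhead : ∫ t in a..(a + ε/3), W g t ≤ ε/3 := by
    have h := intervalIntegral.integral_mono_on (by linarith : a ≤ a + ε/3)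
      (hWint g a (a + ε/3) hg.1) intervalIntegrable_const
      (fun t _ => hWgle1 t)
    rw [intervalIntegral.integral_const, smul_eq_mul] at h
    calc ∫ t in a..(a + ε/3), W g t ≤ (a + ε/3 - a) * 1 := h
      _ = ε/3 := by ring
  have hgν' : ∫ t in (a + ε/3)..(1:ℝ), W g t ≤ ∫ t in (a + ε/3)..(1:ℝ), W ν t := by
    apply intervalIntegral.integral_mono_on (by linarith)
      (hWint g (a + ε/3) 1 hg.1) (hWint ν (a + ε/3) 1 hν.1)
    intro t _
    rw [hWdef]
    dsimp only
    have hnum : ∑ x, g x * (if t ≤ fb x then (1:ℝ) else 0)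
        ≤ ∑ x, ν x * (if t ≤ fb x then (1:ℝ) else 0) := by
      apply Finset.sum_le_sum
      intro x _
      exact mul_le_mul_of_nonneg_right (hgν x) (by positivity)
    exact (div_le_div_iff_of_pos_right hN).mpr hnum
  have hmain : 2 * (ε/3) < ∫ t in (a + ε/3)..(1:ℝ), (W ν t - W one (t - ε/3)) := by
    have hsubint : IntervalIntegrable (fun t => W one (t - ε/3))
        MeasureTheory.volume (a + ε/3) 1 := by
      have : Antitone (fun t => W one (t - ε/3)) :=
        (hWanti one hone).comp_monotone (fun _ _ huv => sub_le_sub_right huv (ε/3))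
      exact this.intervalIntegrable
    rw [intervalIntegral.integral_sub (hWint ν (a + ε/3) 1 hν.1) hsubint]
    rw [hshift]
    linarith [hgap2, hsplit1, htail, hsplit2, hhead, hgν']
  have hex : ∃ t, (a + ε/3 ≤ t ∧ t ≤ 1) ∧ ε/3 ≤ W ν t - W one (t - ε/3) := by
    by_contra hcon
    push_neg at hcon
    have hle : ∫ t in (a + ε/3)..(1:ℝ), (W ν t - W one (t - ε/3))
        ≤ ∫ t in (a + ε/3)..(1:ℝ), (ε/3 : ℝ) := by
      apply intervalIntegral.integral_mono_on (by linarith)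
      · have hsubint : IntervalIntegrable (fun t => W one (t - ε/3))
            MeasureTheory.volume (a + ε/3) 1 := by
          have : Antitone (fun t => W one (t - ε/3)) :=
            (hWanti one hone).comp_monotone (fun _ _ huv => sub_le_sub_right huv (ε/3))
          exact this.intervalIntegrable
        exact (hWint ν (a + ε/3) 1 hν.1).sub hsubint
      · exact intervalIntegrable_const
      · intro t ht
        exact (hcon t ⟨ht.1, ht.2⟩).le
    rw [intervalIntegral.integral_const, smul_eq_mul] at hle
    have hlen : (1 - (a + ε/3)) * (ε/3) < 2 * (ε/3) := by
      have h2 : 1 - (a + ε/3) < 2 := by linarith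
      nlinarith
    linarith
  obtain ⟨t, ⟨ht1, ht2⟩, ht3⟩ := hex
  refine ⟨fb, t, hfbIcc, hfbCC, by linarith, ht2, ?_⟩
  have hthrν : ip X ν (thr fb t) = W ν t := by
    rw [hWdef]
    unfold ip thr
    rfl
  have hthr1 : ip X (fun _ => 1) (thr fb (t - ε/3)) = W one (t - ε/3) := by
    rw [hWdef]
    unfold ip thr
    rfl
  rw [ge_iff_le, hthrν, hthr1]
  linarith
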